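/- Let n ≥ 1 be an integer and let t, y ∈ ℝⁿ satisfy ‖t‖ ≥ 1 and ‖t/‖t‖ − y‖² ≤ 1 − 4/n². Then there exists an integer k with ‖t − k·y‖² ≤ (1 − 1/n²) · ‖t‖². -/

import Mathlib

open Real RealInnerProductSpace

set_option maxHeartbeats 1000000 in
/-- If `‖t‖ ≥ 1` and `‖t/‖t‖ − y‖² ≤ 1 − 4/n²`, then there is an integer `k` with
`‖t − k·y‖² ≤ (1 − 1/n²)·‖t‖²`. -/
theorem exists_integer_multiple (n : ℕ) (hn : 1 ≤ n)
    (t y : EuclideanSpace ℝ (Fin n)) (ht : 1 ≤ ‖t‖)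
    (hty : ‖‖t‖⁻¹ • t - y‖ ^ 2 ≤ 1 - 4 / (n : ℝ) ^ 2) :
    ∃ k : ℤ, ‖t - (k : ℝ) • y‖ ^ 2 ≤ (1 - 1 / (n : ℝ) ^ 2) * ‖t‖ ^ 2 := by
  have hn2 : (0:ℝ) < (n:ℝ)^2 := by positivity
  set c : ℝ := 4 / (n:ℝ)^2 with hc
  have hc0 : 0 < c := by positivity
  set T : ℝ := ‖t‖ with hTdef
  have hT0 : 0 < T := lt_of_lt_of_le one_pos ht
  set A : ℝ := ⟪t, y⟫ with hA
  set β : ℝ := ‖y‖^2 with hβdef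
  have hβ0 : 0 ≤ β := by positivity
  have hu : ‖(T⁻¹ • t)‖ = 1 := by
    rw [norm_smul, norm_inv, norm_norm]
    field_simp
    exact div_self (ne_of_gt hT0)
  have hexp : ‖T⁻¹ • t - y‖^2 = 1 - 2 * (T⁻¹ * A) + β := by
    rw [norm_sub_sq_real, hu, real_inner_smul_left]; ring
  rw [hexp] at hty
  -- key inequality : T * (β + c) ≤ 2 * A
  have h1 : T * (β + c) ≤ 2 * A := by
    have := mul_le_mul_of_nonneg_left hty (le_of_lt hT0)
    rw [mul_sub, mul_add, mul_sub] at this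
    have hTinv : T * (2 * (T⁻¹ * A)) = 2 * A := by
      field_simp
    nlinarith [this]
  have hA0 : 0 < A := by nlinarith
  -- y ≠ 0 : from Cauchy-Schwarz
  have hCS : A ≤ T * ‖y‖ := real_inner_le_norm t y
  have hy0 : 0 < β := by
    rcases lt_or_eq_of_le hβ0 with h | h
    · exact h
    · exfalso
      have : ‖y‖ = 0 := by
        have := h.symm
        rw [hβdef] at this
        nlinarith [norm_nonneg y]
      nlinarith [this, hCS]
  refine ⟨round (A / β), ?_⟩
  set k : ℝ := ((round (A / β) : ℤ) : ℝ) with hk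
  have hround : |A / β - k| ≤ 1 / 2 := abs_sub_round (A / β)
  have hround2 : (A - β * k)^2 ≤ β^2 / 4 := by
    have h2 : (A / β - k)^2 ≤ (1/2)^2 := by
      rw [← sq_abs]
      exact pow_le_pow_left₀ (abs_nonneg _) hround 2
    have h3 : A - β * k = β * (A / β - k) := by field_simp
    rw [h3]
    nlinarith [sq_nonneg (A / β - k), hy0]
  have hgexp : ‖t - k • y‖^2 = T^2 - 2*k*A + k^2*β := by
    rw [norm_sub_sq_real, real_inner_smul_right, norm_smul, Real.norm_eq_abs]
    rw [hβdef, hTdef, mul_pow, sq_abs]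
    ring
  rw [hgexp]
  have hA2 : T^2*(β+c)^2 ≤ 4*A^2 := by
    have hnn : (0:ℝ) ≤ T * (β + c) := by positivity
    calc T^2*(β+c)^2 = (T*(β+c))*(T*(β+c)) := by ring
      _ ≤ (2*A)*(2*A) := mul_le_mul h1 h1 hnn (by linarith)
      _ = 4*A^2 := by ring
  have hT2 : 1 ≤ T^2 := by nlinarith
  have hsq : β^2 ≤ T^2*β^2 := by nlinarith [mul_le_mul_of_nonneg_right hT2 (sq_nonneg β)]
  have key : (c/4) * T^2 * β ≤ (2*k*A - k^2*β) * β := by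
    have e1 : (2*k*A - k^2*β)*β = A^2 - (A - β*k)^2 := by ring
    rw [e1]
    nlinarith [hA2, hround2, hsq, mul_nonneg (mul_nonneg (le_of_lt (mul_pos hT0 hT0)) hc0.le) hy0.le,
      mul_nonneg (le_of_lt (mul_pos hT0 hT0)) (sq_nonneg c)]
  have key2 : (c/4) * T^2 ≤ 2*k*A - k^2*β := by
    exact le_of_mul_le_mul_right key hy0
  have : (1 : ℝ) / (n:ℝ)^2 = c / 4 := by rw [hc]; ring
  rw [this]
  nlinarith [key2]
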